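/- FastLSU terminates and is equivalent to the Benjamini–Hochberg linear step-up procedure: the sequence defined by r_0 = m and r_{k+1} = #S(r_k·α/m) satisfies r_k = r_{k+1} for some k ≤ m, and for every k at which r_k = r_{k+1} one has r_k = r_BH; consequently the set of p-values selected by FastLSU, {p ∈ C : p < r_k·α/m}, equals the BH rejection set {p ∈ C : p < r_BH·α/m}. -/

import Mathlib

open scoped Classical

/-- `#S(t)`: the number of elements of the multiset `C` that are strictly less than `t`. -/
noncomputable def countBelow (C : Multiset ℝ) (t : ℝ) : ℕ :=
  (C.filter (fun p => p < t)).card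

/-- The `k`-th smallest element (1-indexed order statistic, with multiplicity) of `D`. -/
noncomputable def orderStat (D : Multiset ℝ) (k : ℕ) : ℝ :=
  (D.sort (· ≤ ·)).getD (k - 1) 0

/-- The Benjamini–Hochberg index at level `α`:
`max {i ∈ {1,…,m} : p_(i) < i·α/m}`, with value `0` if this set is empty. -/
noncomputable def rBH (α : ℝ) (C : Multiset ℝ) : ℕ :=
  ((Finset.Icc 1 C.card).filter
    (fun i => orderStat C i < (i : ℝ) * α / (C.card : ℝ))).sup id

/-- FastLSU terminates and is equivalent to the BH linear step-up procedure:
the sequence `r 0 = m`, `r (k+1) = #S(r k · α/m)` satisfies `r k = r (k+1)` for some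
`k ≤ m`; for every `k` at which `r k = r (k+1)` one has `r k = r_BH`; consequently the
set of p-values selected by FastLSU equals the BH rejection set. -/
lemma countBelow_eq_list (C : Multiset ℝ) (t : ℝ) :
    countBelow C t = ((C.sort (· ≤ ·)).filter (fun p => decide (p < t))).length := by
  unfold countBelow
  conv_lhs => rw [← Multiset.sort_eq (s := C) (r := (· ≤ ·))]
  rw [Multiset.filter_coe]
  simp

lemma le_length_filter_iff {L : List ℝ} (hL : L.Pairwise (· ≤ ·)) {n : ℕ}
    (hn : 1 ≤ n) (hnm : n ≤ L.length) (t : ℝ) :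
    n ≤ (L.filter (fun p => decide (p < t))).length ↔ L.getD (n-1) 0 < t := by
  have hlt : n - 1 < L.length := by omega
  rw [List.getD_eq_getElem L 0 hlt]
  have hpw := List.pairwise_iff_getElem.1 hL
  constructor
  · intro h
    by_contra hc
    push_neg at hc
    have hsplit : L = L.take (n-1) ++ L.drop (n-1) := (List.take_append_drop _ _).symm
    have hdropnil : (L.drop (n-1)).filter (fun p => decide (p < t)) = [] := by
      rw [List.filter_eq_nil_iff]
      intro a ha
      obtain ⟨j, hj, rfl⟩ := List.mem_iff_getElem.1 ha
      rw [List.length_drop] at hj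
      rw [List.getElem_drop]
      simp only [decide_eq_true_eq, not_lt]
      refine le_trans hc ?_
      rcases Nat.eq_zero_or_pos j with rfl | hjpos
      · simp
      · exact hpw (n-1) (n-1+j) (by omega) (by omega) (by omega)
    have := congrArg (fun l => (l.filter (fun p => decide (p < t))).length) hsplit
    simp only [List.filter_append, List.length_append, hdropnil, List.length_nil] at this
    have hle : (L.take (n-1)).length = n - 1 := by
      rw [List.length_take]; omega
    have hle2 : ((L.take (n-1)).filter (fun p => decide (p < t))).length ≤ n - 1 :=
      (List.length_filter_le _ _).trans hle.le
    omega
  · intro h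
    have hsplit : L = L.take n ++ L.drop n := (List.take_append_drop _ _).symm
    have htake : (L.take n).filter (fun p => decide (p < t)) = L.take n := by
      rw [List.filter_eq_self]
      intro a ha
      obtain ⟨j, hj, rfl⟩ := List.mem_iff_getElem.1 ha
      rw [List.getElem_take]
      simp only [decide_eq_true_eq]
      have hjlen : j < L.length := by
        have := hj; rw [List.length_take] at this; omega
      rcases eq_or_lt_of_le (show j ≤ n - 1 by
        have := hj; rw [List.length_take] at this; omega) with heq | hlt'
      · exact heq ▸ h
      · exact lt_of_le_of_lt (hpw j (n-1) hjlen hlt hlt') h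
    calc n = (L.take n).length := by rw [List.length_take]; omega
    _ = ((L.take n).filter (fun p => decide (p < t))).length := by rw [htake]
    _ ≤ (L.filter (fun p => decide (p < t))).length := by
        conv_rhs => rw [hsplit]
        rw [List.filter_append, List.length_append]
        omega

lemma countBelow_ge_iff (C : Multiset ℝ) {n : ℕ} (hn : 1 ≤ n) (hnm : n ≤ C.card) (t : ℝ) :
    n ≤ countBelow C t ↔ orderStat C n < t := by
  rw [countBelow_eq_list]
  exact le_length_filter_iff (Multiset.pairwise_sort (s := C) (r := (· ≤ ·))) hn (by simpa using hnm) t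

lemma countBelow_le_card (C : Multiset ℝ) (t : ℝ) : countBelow C t ≤ C.card :=
  Multiset.card_le_card (Multiset.filter_le _ _)

lemma countBelow_mono (C : Multiset ℝ) {s t : ℝ} (h : s ≤ t) :
    countBelow C s ≤ countBelow C t :=
  Multiset.card_le_card (Multiset.monotone_filter_right C (fun a ha => lt_of_lt_of_le ha h))

theorem fastLSU_equiv_BH
    (α : ℝ) (hα0 : 0 < α) (hα1 : α < 1)
    (C : Multiset ℝ) (hC : ∀ p ∈ C, 0 ≤ p ∧ p ≤ 1)
    (m : ℕ) (hm : m = C.card)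
    (r : ℕ → ℕ) (hr0 : r 0 = m)
    (hr : ∀ k, r (k + 1) = countBelow C ((r k : ℝ) * α / (m : ℝ))) :
    (∃ k ≤ m, r k = r (k + 1)) ∧
    ∀ k, r k = r (k + 1) →
      r k = rBH α C ∧
      C.filter (fun p => p < (r k : ℝ) * α / (m : ℝ))
        = C.filter (fun p => p < (rBH α C : ℝ) * α / (m : ℝ)) := by
  subst hm
  have hmono : ∀ a b : ℕ, a ≤ b →
      countBelow C ((a : ℝ) * α / (C.card : ℝ)) ≤ countBelow C ((b : ℝ) * α / (C.card : ℝ)) := by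
    intro a b hab
    apply countBelow_mono
    rw [div_eq_mul_inv, div_eq_mul_inv]
    exact mul_le_mul_of_nonneg_right
      (mul_le_mul_of_nonneg_right (Nat.cast_le.2 hab) hα0.le)
      (inv_nonneg.2 (Nat.cast_nonneg _))
  have hanti : ∀ k, r (k + 1) ≤ r k := by
    intro k
    induction k with
    | zero => rw [hr 0, hr0]; exact countBelow_le_card _ _
    | succ k ih =>
      rw [hr (k+1)]
      conv_rhs => rw [hr k]
      exact hmono _ _ ih
  have hrk_le : ∀ k, r k ≤ C.card := by
    intro k
    cases k with
    | zero => exact hr0.le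
    | succ k => rw [hr k]; exact countBelow_le_card _ _
  -- rBH facts
  have hrBH_le : rBH α C ≤ C.card := by
    apply Finset.sup_le
    intro i hi
    exact (Finset.mem_Icc.1 (Finset.mem_filter.1 hi).1).2
  have hrBH_mem : 1 ≤ rBH α C → rBH α C ∈
      (Finset.Icc 1 C.card).filter
        (fun i => orderStat C i < (i : ℝ) * α / (C.card : ℝ)) := by
    intro h1
    have hne : ((Finset.Icc 1 C.card).filter
        (fun i => orderStat C i < (i : ℝ) * α / (C.card : ℝ))).Nonempty := by
      by_contra hemp
      rw [Finset.not_nonempty_iff_eq_empty] at hemp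
      unfold rBH at h1
      rw [hemp] at h1
      simp at h1
    obtain ⟨i, hi, hsup⟩ := Finset.exists_mem_eq_sup _ hne id
    have : rBH α C = i := hsup
    rwa [this]
  have hlow : ∀ k, rBH α C ≤ r k := by
    intro k
    induction k with
    | zero => rw [hr0]; exact hrBH_le
    | succ k ih =>
      rw [hr k]
      rcases Nat.eq_zero_or_pos (rBH α C) with h0 | h1
      · omega
      · have hmem := hrBH_mem h1
        have hos := (Finset.mem_filter.1 hmem).2
        have : rBH α C ≤ countBelow C ((rBH α C : ℝ) * α / (C.card : ℝ)) :=
          (countBelow_ge_iff C h1 hrBH_le _).2 hos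
        exact this.trans (hmono _ _ ih)
  have hfix : ∀ k, r k = r (k + 1) → r k = rBH α C := by
    intro k hk
    have h1 := hlow k
    rcases Nat.eq_zero_or_pos (r k) with h0 | hpos
    · omega
    · have hcnt : r k ≤ countBelow C ((r k : ℝ) * α / (C.card : ℝ)) := by
        rw [← hr k, ← hk]
      have h2 := (countBelow_ge_iff C hpos (hrk_le k) _).1 hcnt
      have hmem : r k ∈ (Finset.Icc 1 C.card).filter
          (fun i => orderStat C i < (i : ℝ) * α / (C.card : ℝ)) :=
        Finset.mem_filter.2 ⟨Finset.mem_Icc.2 ⟨hpos, hrk_le k⟩, h2⟩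
      have := Finset.le_sup (f := id) hmem
      exact le_antisymm this h1
  refine ⟨?_, fun k hk => ⟨hfix k hk, by rw [hfix k hk]⟩⟩
  by_contra hcon
  push_neg at hcon
  have hstrict : ∀ k, k ≤ C.card → r (k + 1) < r k :=
    fun k hk => lt_of_le_of_ne (hanti k) (fun e => hcon k hk e.symm)
  have hdec : ∀ k, k ≤ C.card → r k + k ≤ C.card := by
    intro k
    induction k with
    | zero => intro _; simpa using hr0.le
    | succ k ih =>
      intro hk
      have h1 := ih (Nat.le_of_succ_le hk)
      have h2 := hstrict k (Nat.le_of_succ_le hk)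
      omega
  have h0 : r C.card = 0 := by have := hdec C.card le_rfl; omega
  have := hstrict C.card le_rfl
  omega
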